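/- Cauchy's formula for cycle types (the θ = 1 case of the Ewens sampling formula): for every integer n ≥ 1 and every vector (a_1,…,a_n) of non-negative integers with Σ_{i=1}^n i·a_i = n, the number of permutations of an n-element set whose cycle decomposition (including fixed points as 1-cycles) contains exactly a_i cycles of length i for each i equals n! / (∏_{i=1}^n i^{a_i}·a_i!). Equivalently, for a uniformly random permutation of n elements, the probability of this cycle type is 1/(∏_{i=1}^n i^{a_i}·a_i!), which is ESF_{n,1}(a). -/

import Mathlib

open Finset

/-- The rising factorial `S_n(θ) = θ(θ+1)⋯(θ+n−1)`. -/
noncomputable def risingFac (θ : ℝ) (n : ℕ) : ℝ := ∏ j ∈ Finset.range n, (θ + j)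

/-- The Ewens sampling formula weight of a partition of `n` encoded by a vector
`a : Fin n → ℕ`, where `a i` is the number of parts equal to `i+1`. -/
noncomputable def ESF (n : ℕ) (θ : ℝ) (a : Fin n → ℕ) : ℝ :=
  (Nat.factorial n : ℝ) * θ ^ (∑ i, a i) /
    ((∏ i : Fin n, ((i.1 + 1 : ℝ) ^ (a i) * (Nat.factorial (a i) : ℝ))) * risingFac θ n)

/-- The finite set of all vectors `(a_1, …, a_n)` of non-negative integers with
`Σ_{i=1}^n i·a_i = n` (each entry is at most `n`, so this filtered set captures all of them). -/
def partitionVectors (n : ℕ) : Finset (Fin n → ℕ) :=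
  (Fintype.piFinset fun _ : Fin n => Finset.range (n + 1)).filter
    fun a => ∑ i : Fin n, (i.1 + 1) * a i = n

/-- The number of cycles of length `i` in the cycle decomposition of `σ`,
counting fixed points as cycles of length 1. -/
def cyclesOfLength {n : ℕ} (σ : Equiv.Perm (Fin n)) (i : ℕ) : ℕ :=
  if i = 1 then n - σ.support.card else σ.cycleType.count i


open Finset Equiv Equiv.Perm

variable {n : ℕ} (a : Fin n → ℕ)

/-- model type -/
abbrev Model (a : Fin n → ℕ) := Σ i : Fin n, Fin (a i) × ZMod (i.1 + 1)

def sigma0 (a : Fin n → ℕ) : Perm (Model a) :=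
  Equiv.sigmaCongrRight fun i =>
    (Equiv.refl (Fin (a i))).prodCongr (Equiv.addLeft (1 : ZMod (i.1 + 1)))

theorem sigma0_apply (i : Fin n) (j : Fin (a i)) (t : ZMod (i.1+1)) :
    sigma0 a ⟨i, j, t⟩ = ⟨i, j, 1 + t⟩ := rfl

theorem model_snd_eq {i : Fin n} {j j' : Fin (a i)} {t t' : ZMod (i.1+1)}
    (h : (⟨i, j, t⟩ : Model a) = ⟨i, j', t'⟩) : j = j' ∧ t = t' := by
  simpa [Sigma.mk.inj_iff, Prod.ext_iff] using h

theorem sigma0_pow (k : ℕ) (i : Fin n) (j : Fin (a i)) (t : ZMod (i.1+1)) :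
    (sigma0 a ^ k) ⟨i, j, t⟩ = ⟨i, j, (k : ZMod (i.1+1)) + t⟩ := by
  induction k generalizing t with
  | zero => simp
  | succ m ih =>
      have : (sigma0 a ^ (m+1)) ⟨i,j,t⟩ = (sigma0 a ^ m) ⟨i, j, 1 + t⟩ := by
        rw [pow_succ, Equiv.Perm.mul_apply, sigma0_apply]
      rw [this, ih]
      congr 1
      push_cast
      ring

theorem sigma0_pow_eq_self_iff (k : ℕ) (x : Model a) :
    (sigma0 a ^ k) x = x ↔ (x.1.1 + 1) ∣ k := by
  obtain ⟨i, j, t⟩ := x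
  rw [sigma0_pow]
  constructor
  · intro h
    have h3 := (model_snd_eq a h).2
    have h4 : (k : ZMod (i.1+1)) = 0 := by
      have h5 : (k : ZMod (i.1+1)) + t = 0 + t := by rw [h3, zero_add]
      exact add_right_cancel h5
    exact (ZMod.natCast_eq_zero_iff k (i.1+1)).1 h4
  · intro h
    rw [(ZMod.natCast_eq_zero_iff k (i.1+1)).2 h, zero_add]

theorem one_eq_zero_zmod_iff (i : Fin n) : (1 : ZMod (i.1+1)) = 0 ↔ i.1 = 0 := by
  rw [show (1 : ZMod (i.1+1)) = ((1:ℕ) : ZMod (i.1+1)) by push_cast; rfl,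
    ZMod.natCast_eq_zero_iff, Nat.dvd_one]
  omega

theorem mem_support_sigma0 (x : Model a) : x ∈ (sigma0 a).support ↔ x.1.1 ≠ 0 := by
  obtain ⟨i, j, t⟩ := x
  rw [Equiv.Perm.mem_support, sigma0_apply]
  constructor
  · intro h hi
    exact h (by rw [(one_eq_zero_zmod_iff i).2 hi, zero_add])
  · intro hi h
    have h3 := (model_snd_eq a h).2
    have : (1 : ZMod (i.1+1)) = 0 := by
      have h5 : (1 : ZMod (i.1+1)) + t = 0 + t := by rw [h3, zero_add]
      exact add_right_cancel h5
    exact hi ((one_eq_zero_zmod_iff i).1 this)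

variable {n : ℕ} (a : Fin n → ℕ)

theorem sameCycle_sigma0_iff (i : Fin n) (j : Fin (a i)) (t : ZMod (i.1+1)) (y : Model a) :
    (sigma0 a).SameCycle ⟨i, j, t⟩ y ↔ ∃ s, y = ⟨i, j, s⟩ := by
  constructor
  · intro h
    obtain ⟨m, -, hm⟩ := h.exists_pow_eq'
    rw [sigma0_pow] at hm
    exact ⟨_, hm.symm⟩
  · rintro ⟨s, rfl⟩
    refine ⟨((s - t).val : ℕ), ?_⟩
    rw [zpow_natCast, sigma0_pow]
    congr 1
    rw [show (((s - t).val : ℕ) : ZMod (i.1+1)) = s - t by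
      rw [ZMod.natCast_val, ZMod.cast_id]]
    ring

theorem card_support_cycleOf_sigma0 (x : Model a) (hx : x.1.1 ≠ 0) :
    ((sigma0 a).cycleOf x).support.card = x.1.1 + 1 := by
  obtain ⟨i, j, t⟩ := x
  have hsupp : ((sigma0 a).cycleOf ⟨i,j,t⟩).support
      = Finset.univ.map ⟨fun s : ZMod (i.1+1) => (⟨i, j, s⟩ : Model a),
          fun s s' h => ((model_snd_eq a h).2)⟩ := by
    ext y
    rw [Equiv.Perm.mem_support_cycleOf_iff]
    simp only [Finset.mem_map, Finset.mem_univ, true_and, Function.Embedding.coeFn_mk]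
    rw [sameCycle_sigma0_iff]
    constructor
    · rintro ⟨⟨s, rfl⟩, -⟩; exact ⟨s, rfl⟩
    · rintro ⟨s, rfl⟩
      exact ⟨⟨s, rfl⟩, (mem_support_sigma0 a _).2 hx⟩
  rw [hsupp, Finset.card_map, Finset.card_univ, ZMod.card]
open Finset Equiv Equiv.Perm

variable {α : Type*} [Fintype α] [DecidableEq α]

theorem countA (σ : Perm α) (k : ℕ) (hk : 2 ≤ k) :
    σ.cycleType.count k * k
      = (Finset.univ.filter fun x => (σ.cycleOf x).support.card = k).card := by
  have hset : (Finset.univ.filter fun x => (σ.cycleOf x).support.card = k)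
      = (σ.cycleFactorsFinset.filter fun c => c.support.card = k).biUnion Equiv.Perm.support := by
    ext x
    simp only [mem_filter, mem_univ, true_and, mem_biUnion]
    constructor
    · intro hx
      have hxs : x ∈ σ.support := by
        by_contra h
        rw [Equiv.Perm.notMem_support, ← Equiv.Perm.cycleOf_eq_one_iff] at h
        rw [h] at hx
        simp at hx
        omega
      exact ⟨σ.cycleOf x, ⟨cycleOf_mem_cycleFactorsFinset_iff.2 hxs, hx⟩,
        mem_support_cycleOf_iff.2 ⟨Equiv.Perm.SameCycle.refl σ x, hxs⟩⟩
    · rintro ⟨c, hc, hxc⟩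
      rw [← cycle_is_cycleOf hxc hc.1]
      exact hc.2
  rw [hset, Finset.card_biUnion]
  · rw [Finset.sum_congr rfl (fun c hc => (mem_filter.1 hc).2), Finset.sum_const, smul_eq_mul]
    congr 1
    rw [cycleType_def, Multiset.count_map, Finset.card_filter]
    simp [Finset.sum_multiset_count]
    congr 1
    ext c
    simp [eq_comm]
  · intro c hc d hd hcd
    exact Equiv.Perm.Disjoint.disjoint_support
      (σ.cycleFactorsFinset_pairwise_disjoint (mem_filter.1 hc).1 (mem_filter.1 hd).1 hcd)
open Finset Equiv Equiv.Perm

/-- target cycle type multiset -/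
def Mtype {n : ℕ} (a : Fin n → ℕ) : Multiset ℕ :=
  ∑ i ∈ Finset.univ.filter (fun i : Fin n => i.1 ≠ 0), Multiset.replicate (a i) (i.1+1)

variable {n : ℕ} (a : Fin n → ℕ)

theorem count_Mtype (k : ℕ) :
    (Mtype a).count k
      = if h : 2 ≤ k ∧ k ≤ n then a ⟨k-1, by omega⟩ else 0 := by
  rw [Mtype, Multiset.count_sum']
  split_ifs with h
  · rw [Finset.sum_eq_single (⟨k-1, by omega⟩ : Fin n)]
    · rw [Multiset.count_replicate, if_pos (by simp; omega)]
    · intro i hi hne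
      rw [Multiset.count_replicate, if_neg]
      simp only [Finset.mem_filter] at hi
      intro hc
      apply hne
      apply Fin.ext
      simp
      omega
    · intro hmem
      exfalso
      apply hmem
      simp
      omega
  · apply Finset.sum_eq_zero
    intro i hi
    simp only [Finset.mem_filter, Finset.mem_univ, true_and] at hi
    rw [Multiset.count_replicate, if_neg]
    intro hc
    have := i.2
    omega

theorem card_fiber (i₀ : Fin n) :
    (Finset.univ.filter fun x : Model a => x.1 = i₀).card = a i₀ * (i₀.1 + 1) := by
  have : (Finset.univ.filter fun x : Model a => x.1 = i₀)
      = Finset.univ.map ⟨fun p : Fin (a i₀) × ZMod (i₀.1+1) => (⟨i₀, p⟩ : Model a),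
          fun p q h => by
            have := model_snd_eq a (show (⟨i₀,p.1,p.2⟩ : Model a) = ⟨i₀,q.1,q.2⟩ from h)
            exact Prod.ext this.1 this.2⟩ := by
    ext y
    simp only [Finset.mem_filter, Finset.mem_univ, true_and, Finset.mem_map,
      Function.Embedding.coeFn_mk]
    constructor
    · rintro rfl
      exact ⟨y.2, rfl⟩
    · rintro ⟨p, rfl⟩
      rfl
  rw [this, Finset.card_map, Finset.card_univ, Fintype.card_prod, Fintype.card_fin, ZMod.card]

theorem cycleType_sigma0 : (sigma0 a).cycleType = Mtype a := by
  ext k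
  rcases lt_or_ge k 2 with hk | hk
  · rw [Multiset.count_eq_zero_of_notMem, Multiset.count_eq_zero_of_notMem]
    · intro hmem
      have := Multiset.count_pos.2 hmem
      rw [count_Mtype] at this
      split_ifs at this with h
      · omega
      · omega
    · intro hmem
      have := Equiv.Perm.two_le_of_mem_cycleType hmem
      omega
  · have hA := countA (sigma0 a) k hk
    have hS : (Finset.univ.filter fun x : Model a => ((sigma0 a).cycleOf x).support.card = k)
        = Finset.univ.filter fun x : Model a => x.1.1 + 1 = k := by
      ext x
      simp only [Finset.mem_filter, Finset.mem_univ, true_and]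
      constructor
      · intro hx
        rcases Nat.eq_zero_or_pos x.1.1 with h0 | h0
        · exfalso
          have hns : x ∉ (sigma0 a).support := by
            rw [mem_support_sigma0]; omega
          rw [Equiv.Perm.notMem_support, ← Equiv.Perm.cycleOf_eq_one_iff] at hns
          rw [hns] at hx
          simp at hx
          omega
        · rw [card_support_cycleOf_sigma0 a x (by omega)] at hx
          exact hx
      · intro hx
        rw [card_support_cycleOf_sigma0 a x (by omega)]
        exact hx
    have hcount : ((sigma0 a).cycleType.count k) * k = ((Mtype a).count k) * k := by
      rw [hA, hS, count_Mtype]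
      split_ifs with h
      · have : (Finset.univ.filter fun x : Model a => x.1.1 + 1 = k)
            = Finset.univ.filter fun x : Model a => x.1 = ⟨k-1, by omega⟩ := by
          ext x
          simp only [Finset.mem_filter, Finset.mem_univ, true_and]
          rw [Fin.ext_iff]
          simp
          omega
        rw [this, card_fiber]
        simp
        left
        omega
      · push_neg at h
        rw [Finset.filter_eq_empty_iff.2, Finset.card_empty, zero_mul]
        intro x _
        have := x.1.2
        specialize h hk
        omega
    have hkpos : 0 < k := by omega
    exact Nat.eq_of_mul_eq_mul_right hkpos hcount
open Finset Equiv Equiv.Perm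

variable {n : ℕ} (a : Fin n → ℕ)

/-- parameter group for the centralizer -/
abbrev CParam (a : Fin n → ℕ) := ∀ i : Fin n, Perm (Fin (a i)) × (Fin (a i) → ZMod (i.1+1))

def PsiMap (g : CParam a) : Perm (Model a) :=
  Equiv.sigmaCongrRight fun i =>
    Equiv.prodShear (g i).1 (fun j => Equiv.addLeft ((g i).2 j))

theorem PsiMap_apply (g : CParam a) (i : Fin n) (j : Fin (a i)) (t : ZMod (i.1+1)) :
    PsiMap a g ⟨i, j, t⟩ = ⟨i, (g i).1 j, (g i).2 j + t⟩ := rfl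

theorem PsiMap_commute (g : CParam a) : PsiMap a g * sigma0 a = sigma0 a * PsiMap a g := by
  apply Equiv.ext
  intro x
  obtain ⟨i, j, t⟩ := x
  simp only [Equiv.Perm.mul_apply]
  rw [sigma0_apply, PsiMap_apply, PsiMap_apply, sigma0_apply]
  congr 1
  ring

/-- first components are preserved by commuting permutations -/
theorem fst_eq_of_commute (τ : Perm (Model a)) (hτ : τ * sigma0 a = sigma0 a * τ)
    (x : Model a) : (τ x).1 = x.1 := by
  have key : ∀ k : ℕ, ∀ y : Model a, τ ((sigma0 a ^ k) y) = (sigma0 a ^ k) (τ y) := by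
    intro k y
    have : τ * sigma0 a ^ k = sigma0 a ^ k * τ :=
      (Commute.pow_right hτ k)
    calc τ ((sigma0 a ^ k) y) = (τ * sigma0 a ^ k) y := rfl
    _ = (sigma0 a ^ k * τ) y := by rw [this]
    _ = (sigma0 a ^ k) (τ y) := rfl
  have h1 : (sigma0 a ^ (x.1.1 + 1)) (τ x) = τ x := by
    rw [← key, (sigma0_pow_eq_self_iff a _ x).2 dvd_rfl]
  have h2 : (sigma0 a ^ ((τ x).1.1 + 1)) x = x := by
    have := key ((τ x).1.1 + 1) x
    rw [(sigma0_pow_eq_self_iff a _ (τ x)).2 dvd_rfl] at this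
    exact τ.injective this
  have d1 := (sigma0_pow_eq_self_iff a _ (τ x)).1 h1
  have d2 := (sigma0_pow_eq_self_iff a _ x).1 h2
  have := Nat.dvd_antisymm d1 d2
  exact Fin.ext (by omega)

theorem PsiMap_bijective :
    Function.Bijective (fun g : CParam a =>
      (⟨PsiMap a g, PsiMap_commute a g⟩ :
        {τ : Perm (Model a) // τ * sigma0 a = sigma0 a * τ})) := by
  constructor
  · intro g g' h
    have h' : PsiMap a g = PsiMap a g' := congrArg Subtype.val h
    funext i
    have hj : ∀ j : Fin (a i), ((g i).1 j, (g i).2 j) = ((g' i).1 j, (g' i).2 j) := by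
      intro j
      have := DFunLike.congr_fun h' (⟨i, j, 0⟩ : Model a)
      rw [PsiMap_apply, PsiMap_apply] at this
      have h2 := model_snd_eq a this
      simp only [add_zero] at h2
      exact Prod.ext h2.1 h2.2
    have h1 : (g i).1 = (g' i).1 := Equiv.ext fun j => (Prod.ext_iff.1 (hj j)).1
    have h2 : (g i).2 = (g' i).2 := funext fun j => (Prod.ext_iff.1 (hj j)).2
    exact Prod.ext h1 h2
  · rintro ⟨τ, hτ⟩
    have key : ∀ k : ℕ, ∀ y : Model a, τ ((sigma0 a ^ k) y) = (sigma0 a ^ k) (τ y) := by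
      intro k y
      have : τ * sigma0 a ^ k = sigma0 a ^ k * τ := (Commute.pow_right hτ k)
      calc τ ((sigma0 a ^ k) y) = (τ * sigma0 a ^ k) y := rfl
      _ = (sigma0 a ^ k * τ) y := by rw [this]
      _ = (sigma0 a ^ k) (τ y) := rfl
    have hex : ∀ i : Fin n, ∀ j : Fin (a i), ∃ j' t', τ ⟨i, j, 0⟩ = ⟨i, j', t'⟩ := by
      intro i j
      have h1 := fst_eq_of_commute a τ hτ ⟨i, j, 0⟩
      rcases hy : τ ⟨i, j, 0⟩ with ⟨i', j', t'⟩
      rw [hy] at h1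
      simp only at h1
      subst h1
      exact ⟨j', t', rfl⟩
    choose P Q hPQ using hex
    have hstruct : ∀ (i : Fin n) (j : Fin (a i)) (t : ZMod (i.1+1)),
        τ ⟨i, j, t⟩ = ⟨i, P i j, Q i j + t⟩ := by
      intro i j t
      have h0 : (sigma0 a ^ t.val) ⟨i, j, (0 : ZMod (i.1+1))⟩ = ⟨i, j, t⟩ := by
        rw [sigma0_pow]
        congr 1
        rw [ZMod.natCast_val, ZMod.cast_id, add_zero]
      rw [← h0, key, hPQ, sigma0_pow]
      congr 1
      rw [ZMod.natCast_val, ZMod.cast_id]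
      ring
    have hPinj : ∀ i : Fin n, Function.Injective (P i) := by
      intro i j1 j2 hP
      have e1 : (sigma0 a ^ ((Q i j2 - Q i j1).val)) (τ ⟨i, j1, 0⟩) = τ ⟨i, j2, 0⟩ := by
        rw [hPQ, sigma0_pow, hPQ, hP]
        congr 1
        rw [ZMod.natCast_val, ZMod.cast_id]
        ring
      rw [← key] at e1
      have e2 := τ.injective e1
      rw [sigma0_pow] at e2
      exact (model_snd_eq a e2).1
    refine ⟨fun i => (Equiv.ofBijective (P i) ((Finite.injective_iff_bijective).1 (hPinj i)), Q i),
      Subtype.ext ?_⟩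
    apply Equiv.ext
    intro x
    obtain ⟨i, j, t⟩ := x
    rw [PsiMap_apply, hstruct]
    rfl
open Finset Equiv Equiv.Perm

variable {α β : Type*} [Fintype α] [DecidableEq α] [Fintype β] [DecidableEq β]

/-- `permCongr` as a multiplicative equivalence. -/
def permCongrMulEquiv (e : α ≃ β) : Perm α ≃* Perm β :=
  { Equiv.permCongr e with
    map_mul' := fun σ τ => by ext x; simp [Equiv.permCongr_def, mul_apply] }

theorem permCongrMulEquiv_apply (e : α ≃ β) (σ : Perm α) :
    permCongrMulEquiv e σ = e.permCongr σ := rfl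

theorem support_permCongr (e : α ≃ β) (σ : Perm α) :
    (e.permCongr σ).support = σ.support.map e.toEmbedding := by
  ext x
  simp only [Equiv.Perm.mem_support, Finset.mem_map, Equiv.permCongr_apply, Equiv.coe_toEmbedding]
  constructor
  · intro h
    exact ⟨e.symm x, by
      refine ⟨fun hc => h ?_, by simp⟩
      rw [hc]; simp⟩
  · rintro ⟨y, hy, rfl⟩
    simpa using fun hc => hy (e.injective hc)

theorem isCycle_permCongr (e : α ≃ β) {σ : Perm α} (h : σ.IsCycle) :
    (e.permCongr σ).IsCycle := by
  obtain ⟨x, hx, hall⟩ := h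
  refine ⟨e x, by simpa using fun hc => hx (e.injective hc), fun y hy => ?_⟩
  have hy' : σ (e.symm y) ≠ e.symm y := by
    intro hc
    apply hy
    simp only [Equiv.permCongr_apply]
    rw [hc]; simp
  obtain ⟨k, hk⟩ := hall hy'
  refine ⟨k, ?_⟩
  have : (e.permCongr σ) ^ k = e.permCongr (σ ^ k) := by
    rw [← permCongrMulEquiv_apply, ← permCongrMulEquiv_apply, map_zpow]
  rw [this]
  simp only [Equiv.permCongr_apply, Equiv.symm_apply_apply]
  rw [hk]; simp

theorem cycleType_permCongr (e : α ≃ β) (σ : Perm α) :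
    (e.permCongr σ).cycleType = σ.cycleType := by
  induction σ using cycle_induction_on with
  | base_one =>
      have : e.permCongr (1 : Perm α) = 1 := by ext x; simp [Equiv.permCongr_def]
      rw [this]
      simp
  | base_cycles σ hσ =>
      rw [hσ.cycleType, (isCycle_permCongr e hσ).cycleType, support_permCongr]
      simp
  | induction_disjoint σ τ hd hc ihσ ihτ =>
      have hmul : e.permCongr (σ * τ) = e.permCongr σ * e.permCongr τ := by
        ext x; simp [Equiv.permCongr_def, mul_apply]
      have hd' : (e.permCongr σ).Disjoint (e.permCongr τ) := by
        intro x
        rcases hd (e.symm x) with h | h <;> [left; right] <;>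
          simp [Equiv.permCongr_apply, h]
      rw [hmul, Equiv.Perm.Disjoint.cycleType_mul hd', Equiv.Perm.Disjoint.cycleType_mul hd, ihσ, ihτ]
open Finset Equiv Equiv.Perm

/-- commuting elements subtype equiv conjugation stabilizer -/
def commuteEquivStabilizer {G : Type*} [Group G] (g : G) :
    {h : G // h * g = g * h} ≃ MulAction.stabilizer (ConjAct G) g where
  toFun h := ⟨ConjAct.toConjAct h.1, by
    rw [MulAction.mem_stabilizer_iff, ConjAct.smul_def, ConjAct.ofConjAct_toConjAct,
      mul_inv_eq_iff_eq_mul, h.2]⟩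
  invFun u := ⟨ConjAct.ofConjAct u.1, by
    have := u.2
    rw [MulAction.mem_stabilizer_iff, ConjAct.smul_def, mul_inv_eq_iff_eq_mul] at this
    rw [this]⟩
  left_inv h := by simp
  right_inv u := by simp

variable {n : ℕ} (a : Fin n → ℕ)

theorem card_commute_sigma0 :
    Fintype.card {τ : Perm (Model a) // τ * sigma0 a = sigma0 a * τ}
      = ∏ i : Fin n, (i.1 + 1) ^ (a i) * Nat.factorial (a i) := by
  rw [← Fintype.card_of_bijective (PsiMap_bijective a)]
  rw [Fintype.card_pi]
  apply Finset.prod_congr rfl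
  intro i _
  rw [Fintype.card_prod, Fintype.card_perm, Fintype.card_fin, Fintype.card_fun, ZMod.card,
    Fintype.card_fin, mul_comm]

theorem main_count (hn : 1 ≤ n) (ha : ∑ i : Fin n, (i.1 + 1) * a i = n) :
    (Finset.univ.filter fun σ : Perm (Fin n) => σ.cycleType = Mtype a).card
      * ∏ i : Fin n, (i.1 + 1) ^ (a i) * Nat.factorial (a i) = Nat.factorial n := by
  classical
  have hcard : Fintype.card (Model a) = n := by
    rw [Fintype.card_sigma]
    conv_rhs => rw [← ha]
    apply Finset.sum_congr rfl
    intro i _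
    rw [Fintype.card_prod, Fintype.card_fin, ZMod.card, mul_comm]
  let e : Model a ≃ Fin n := Fintype.equivFinOfCardEq hcard
  let σ₂ : Perm (Fin n) := e.permCongr (sigma0 a)
  have hσ₂ : σ₂.cycleType = Mtype a := by
    rw [show σ₂ = e.permCongr (sigma0 a) from rfl, cycleType_permCongr, cycleType_sigma0]
  -- the filter set is the conjugation orbit of σ₂
  letI : Fintype (MulAction.orbit (ConjAct (Perm (Fin n))) σ₂) := Fintype.ofFinite _
  have horbit : (Finset.univ.filter fun σ : Perm (Fin n) => σ.cycleType = Mtype a).card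
      = Fintype.card (MulAction.orbit (ConjAct (Perm (Fin n))) σ₂) := by
    rw [← Fintype.card_subtype]
    apply Fintype.card_congr
    apply Equiv.subtypeEquivRight
    intro σ
    rw [ConjAct.mem_orbit_conjAct, isConj_iff_cycleType_eq, hσ₂]
  -- stabilizer card
  have hstab : Fintype.card (MulAction.stabilizer (ConjAct (Perm (Fin n))) σ₂)
      = ∏ i : Fin n, (i.1 + 1) ^ (a i) * Nat.factorial (a i) := by
    rw [← Fintype.card_congr (commuteEquivStabilizer σ₂), ← card_commute_sigma0 a]
    apply Fintype.card_congr
    refine ⟨fun τ => ⟨(permCongrMulEquiv e).symm τ.1, ?_⟩,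
      fun τ => ⟨permCongrMulEquiv e τ.1, ?_⟩, fun τ => by simp, fun τ => by simp⟩
    · have h : τ.1 * permCongrMulEquiv e (sigma0 a)
          = permCongrMulEquiv e (sigma0 a) * τ.1 := τ.2
      have h2 := congrArg (permCongrMulEquiv e).symm h
      simpa [map_mul] using h2
    · show permCongrMulEquiv e τ.1 * permCongrMulEquiv e (sigma0 a)
        = permCongrMulEquiv e (sigma0 a) * permCongrMulEquiv e τ.1
      rw [← map_mul, ← map_mul, τ.2]
  have hos := MulAction.card_orbit_mul_card_stabilizer_eq_card_group
    (ConjAct (Perm (Fin n))) σ₂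
  rw [ConjAct.card, Fintype.card_perm, Fintype.card_fin] at hos
  rw [horbit, ← hstab]
  exact hos

theorem cond_iff (n : ℕ) (hn : 1 ≤ n) (a : Fin n → ℕ)
    (ha : ∑ i : Fin n, (i.1 + 1) * a i = n) (σ : Equiv.Perm (Fin n)) :
    (∀ i : Fin n, cyclesOfLength σ (i.1 + 1) = a i) ↔ σ.cycleType = Mtype a := by
  have i0 : Fin n := ⟨0, hn⟩
  have hsplit : a ⟨0, hn⟩ + (Mtype a).sum = n := by
    have hMs : (Mtype a).sum
        = ∑ i ∈ Finset.univ.filter (fun i : Fin n => ¬ i.1 = 0), (i.1 + 1) * a i := by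
      rw [Mtype, Multiset.sum_sum]
      simp only [ne_eq]
      apply Finset.sum_congr rfl
      intro i _
      rw [Multiset.sum_replicate, smul_eq_mul, mul_comm]
    have h0 : ∑ i ∈ Finset.univ.filter (fun i : Fin n => i.1 = 0), (i.1 + 1) * a i
        = a ⟨0, hn⟩ := by
      have : Finset.univ.filter (fun i : Fin n => i.1 = 0) = {⟨0, hn⟩} := by
        ext i
        simp [Fin.ext_iff]
      rw [this, Finset.sum_singleton]
      simp
    rw [← Finset.sum_filter_add_sum_filter_not Finset.univ (fun i : Fin n => i.1 = 0)
      (fun i => (i.1 + 1) * a i)] at ha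
    rw [hMs]
    omega
  constructor
  · intro h
    ext k
    rw [count_Mtype]
    rcases lt_or_ge k 2 with hk | hk
    · rw [dif_neg (by omega)]
      apply Multiset.count_eq_zero_of_notMem
      intro hmem
      have := Equiv.Perm.two_le_of_mem_cycleType hmem
      omega
    · rcases le_or_gt k n with hkn | hkn
      · rw [dif_pos ⟨hk, hkn⟩]
        have hi := h ⟨k - 1, by omega⟩
        rw [cyclesOfLength, if_neg (by simp; omega)] at hi
        simpa [Nat.sub_add_cancel (by omega : 1 ≤ k)] using hi
      · rw [dif_neg (by omega)]
        apply Multiset.count_eq_zero_of_notMem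
        intro hmem
        have h1 := Equiv.Perm.le_card_support_of_mem_cycleType hmem
        have h2 : σ.support.card ≤ n := by
          simpa using Finset.card_le_univ σ.support
        omega
  · intro h i
    rw [cyclesOfLength]
    split_ifs with h1
    · have hval : i.1 = 0 := by omega
      have hi0 : i = ⟨0, hn⟩ := Fin.ext (by rw [hval])
      have hs : σ.support.card = (Mtype a).sum := by
        rw [← h, Equiv.Perm.sum_cycleType]
      rw [hs, hi0]
      omega
    · rw [h, count_Mtype, dif_pos ⟨by omega, by have := i.2; omega⟩]
      exact congrArg a (Fin.ext (by simp))

theorem cauchy_formula_cycle_types (n : ℕ) (hn : 1 ≤ n)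
    (a : Fin n → ℕ) (ha : ∑ i : Fin n, (i.1 + 1) * a i = n) :
    ((Finset.univ.filter fun σ : Equiv.Perm (Fin n) =>
        ∀ i : Fin n, cyclesOfLength σ (i.1 + 1) = a i).card : ℝ) =
      (Nat.factorial n : ℝ) /
        (∏ i : Fin n, ((i.1 + 1 : ℝ) ^ (a i) * (Nat.factorial (a i) : ℝ))) ∧
    ((Finset.univ.filter fun σ : Equiv.Perm (Fin n) =>
        ∀ i : Fin n, cyclesOfLength σ (i.1 + 1) = a i).card : ℝ) / (Nat.factorial n : ℝ) =
      ESF n 1 a := by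
  classical
  have hfilter : (Finset.univ.filter fun σ : Equiv.Perm (Fin n) =>
        ∀ i : Fin n, cyclesOfLength σ (i.1 + 1) = a i)
      = Finset.univ.filter fun σ : Equiv.Perm (Fin n) => σ.cycleType = Mtype a := by
    apply Finset.filter_congr
    intro σ _
    exact cond_iff n hn a ha σ
  have hmain := main_count a hn ha
  set N := (Finset.univ.filter fun σ : Equiv.Perm (Fin n) => σ.cycleType = Mtype a).card
  have hPr : (∏ i : Fin n, ((i.1 + 1 : ℝ) ^ (a i) * (Nat.factorial (a i) : ℝ)))
      = ((∏ i : Fin n, (i.1 + 1) ^ (a i) * Nat.factorial (a i) : ℕ) : ℝ) := by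
    push_cast
    rfl
  have hPrpos : (0:ℝ) < ((∏ i : Fin n, (i.1 + 1) ^ (a i) * Nat.factorial (a i) : ℕ) : ℝ) := by
    have : 0 < ∏ i : Fin n, (i.1 + 1) ^ (a i) * Nat.factorial (a i) :=
      Finset.prod_pos fun i _ => Nat.mul_pos (Nat.pow_pos (by omega))
        (Nat.factorial_pos _)
    exact_mod_cast this
  have hfac : (0:ℝ) < (Nat.factorial n : ℝ) := by exact_mod_cast Nat.factorial_pos n
  have hNR : (N : ℝ) = (Nat.factorial n : ℝ)
      / (∏ i : Fin n, ((i.1 + 1 : ℝ) ^ (a i) * (Nat.factorial (a i) : ℝ))) := by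
    rw [hPr, eq_div_iff (ne_of_gt hPrpos)]
    exact_mod_cast hmain
  have hrising : risingFac 1 n = (Nat.factorial n : ℝ) := by
    rw [risingFac]
    calc ∏ j ∈ Finset.range n, ((1:ℝ) + j)
        = ∏ j ∈ Finset.range n, ((j + 1 : ℕ) : ℝ) := by
          apply Finset.prod_congr rfl
          intro j _
          push_cast
          ring
      _ = ((∏ j ∈ Finset.range n, (j + 1) : ℕ) : ℝ) := by rw [Nat.cast_prod]
      _ = (Nat.factorial n : ℝ) := by rw [Finset.prod_range_add_one_eq_factorial]
  constructor
  · rw [hfilter]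
    exact hNR
  · rw [hfilter, hNR, ESF, hrising, hPr, one_pow, mul_one]
    rw [div_div]
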